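/- Let K be a compact, perfectly normal topological space. A real-valued function f ∈ C(K) with ‖f‖ = 1 is a (ρ₊)-right symmetric point of C(K) if and only if f(k) ≠ 0 for every k ∈ K. -/

import Mathlib

open Filter Topology Set Metric NormedSpace

noncomputable section

/-- Birkhoff–James orthogonality: `x ⊥_B y` iff `‖x + t • y‖ ≥ ‖x‖` for all real `t`. -/
def BJOrth {E : Type*} [NormedAddCommGroup E] [NormedSpace ℝ E] (x y : E) : Prop :=
  ∀ t : ℝ, ‖x‖ ≤ ‖x + t • y‖

/-- The norm derivative `ρ'₊(x,y) = ‖x‖ · lim_{t→0⁺} (‖x+ty‖-‖x‖)/t`. -/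
def rhoPlus {E : Type*} [NormedAddCommGroup E] [NormedSpace ℝ E] (x y : E) : ℝ :=
  ‖x‖ * limUnder (𝓝[>] (0 : ℝ)) (fun t => (‖x + t • y‖ - ‖x‖) / t)

/-- The norm derivative `ρ'₋(x,y) = ‖x‖ · lim_{t→0⁻} (‖x+ty‖-‖x‖)/t`. -/
def rhoMinus {E : Type*} [NormedAddCommGroup E] [NormedSpace ℝ E] (x y : E) : ℝ :=
  ‖x‖ * limUnder (𝓝[<] (0 : ℝ)) (fun t => (‖x + t • y‖ - ‖x‖) / t)

/-- The norm derivative `ρ'(x,y) = (ρ'₊(x,y) + ρ'₋(x,y))/2`. -/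
def rhoDer {E : Type*} [NormedAddCommGroup E] [NormedSpace ℝ E] (x y : E) : ℝ :=
  (rhoPlus x y + rhoMinus x y) / 2

/-- `x` is an exposed point of the closed unit ball of `E`: there is a norm-one functional `f`
with `f x = 1` and `f u < 1` for every `u` in the ball with `u ≠ x`. -/
def ExposedPt {E : Type*} [NormedAddCommGroup E] [NormedSpace ℝ E] (x : E) : Prop :=
  ‖x‖ ≤ 1 ∧ ∃ f : E →L[ℝ] ℝ, ‖f‖ = 1 ∧ f x = 1 ∧ ∀ u : E, ‖u‖ ≤ 1 → u ≠ x → f u < 1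

namespace Stmt14Aux

variable {E : Type*} [NormedAddCommGroup E] [NormedSpace ℝ E]

/-- The right derivative value of the norm. -/
def L (x y : E) : ℝ := sInf ((fun t => (‖x + t • y‖ - ‖x‖) / t) '' Set.Ioi 0)

lemma quot_mono (x y : E) :
    MonotoneOn (fun t => (‖x + t • y‖ - ‖x‖) / t) (Set.Ioi 0) := by
  intro s hs t ht hst
  simp only [Set.mem_Ioi] at hs ht
  have key : t * ‖x + s • y‖ ≤ (t - s) * ‖x‖ + s * ‖x + t • y‖ := by
    have e : t • (x + s • y) = (t - s) • x + s • (x + t • y) := by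
      simp only [smul_add, smul_smul, sub_smul]
      rw [mul_comm]
      abel
    calc t * ‖x + s • y‖ = ‖t • (x + s • y)‖ := by
          rw [norm_smul, Real.norm_eq_abs, abs_of_pos ht]
      _ = ‖(t - s) • x + s • (x + t • y)‖ := by rw [e]
      _ ≤ ‖(t - s) • x‖ + ‖s • (x + t • y)‖ := norm_add_le _ _
      _ = (t - s) * ‖x‖ + s * ‖x + t • y‖ := by
          rw [norm_smul, norm_smul, Real.norm_eq_abs, Real.norm_eq_abs,
            abs_of_nonneg (by linarith), abs_of_pos hs]
  rw [div_le_div_iff₀ hs ht]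
  nlinarith [key]

lemma quot_bddBelow (x y : E) :
    BddBelow ((fun t => (‖x + t • y‖ - ‖x‖) / t) '' Set.Ioi 0) := by
  refine ⟨-‖y‖, ?_⟩
  rintro r ⟨t, ht, rfl⟩
  simp only [Set.mem_Ioi] at ht
  rw [le_div_iff₀ ht]
  have h1 : ‖x‖ ≤ ‖x + t • y‖ + t * ‖y‖ := by
    calc ‖x‖ = ‖x + t • y - t • y‖ := by rw [add_sub_cancel_right]
      _ ≤ ‖x + t • y‖ + ‖t • y‖ := norm_sub_le _ _
      _ = ‖x + t • y‖ + t * ‖y‖ := by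
          rw [norm_smul, Real.norm_eq_abs, abs_of_pos ht]
  nlinarith

lemma tendsto_quot (x y : E) :
    Tendsto (fun t => (‖x + t • y‖ - ‖x‖) / t) (𝓝[>] (0 : ℝ)) (𝓝 (L x y)) :=
  MonotoneOn.tendsto_nhdsGT (quot_mono x y) (quot_bddBelow x y)

lemma rhoPlus_eq (x y : E) : rhoPlus x y = ‖x‖ * L x y := by
  unfold rhoPlus
  rw [(tendsto_quot x y).limUnder_eq]

lemma L_le (x y : E) {t : ℝ} (ht : 0 < t) : L x y ≤ (‖x + t • y‖ - ‖x‖) / t :=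
  csInf_le (quot_bddBelow x y) ⟨t, ht, rfl⟩

lemma le_L (x y : E) {c : ℝ} (h : ∀ t : ℝ, 0 < t → c ≤ (‖x + t • y‖ - ‖x‖) / t) :
    c ≤ L x y :=
  le_csInf ⟨_, ⟨1, Set.mem_Ioi.mpr one_pos, rfl⟩⟩ (by rintro r ⟨t, ht, rfl⟩; exact h t ht)

lemma rhoPlus_zero_right (x : E) : rhoPlus x (0 : E) = 0 := by
  unfold rhoPlus
  have e : (fun t : ℝ => (‖x + t • (0 : E)‖ - ‖x‖) / t) = fun _ => 0 := by
    funext t; simp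
  rw [e, Filter.Tendsto.limUnder_eq (tendsto_const_nhds (α := ℝ)), mul_zero]

variable {K : Type*} [TopologicalSpace K] [CompactSpace K]

lemma nonempty_of_ne_zero (x : C(K, ℝ)) (hx : x ≠ 0) : Nonempty K := by
  by_contra h
  exact hx (ContinuousMap.ext fun k => absurd ⟨k⟩ h)

lemma exists_max (x : C(K, ℝ)) [Nonempty K] : ∃ k, |x k| = ‖x‖ := by
  obtain ⟨k, -, hk⟩ := isCompact_univ.exists_isMaxOn Set.univ_nonempty
    ((continuous_abs.comp x.continuous).continuousOn)
  refine ⟨k, le_antisymm ?_ ?_⟩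
  · simpa using x.norm_coe_le_norm k
  · refine (ContinuousMap.norm_le x (abs_nonneg _)).mpr fun j => ?_
    simpa using hk (Set.mem_univ j)

lemma abs_apply_le (x : C(K, ℝ)) (k : K) : |x k| ≤ ‖x‖ := by
  simpa using x.norm_coe_le_norm k

/-- Lower bound for `L` coming from a norm-attaining point. -/
lemma L_ge_of_sign {x y : C(K, ℝ)} {k : K} {s : ℝ} (hs : s * x k = |x k|)
    (hs1 : |s| = 1) (hk : |x k| = ‖x‖) : s * y k ≤ L x y := by
  refine le_L x y fun t ht => ?_
  rw [le_div_iff₀ ht]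
  have h1 : s * (x k + t * y k) ≤ |x k + t * y k| := by
    calc s * (x k + t * y k) ≤ |s * (x k + t * y k)| := le_abs_self _
      _ = |s| * |x k + t * y k| := abs_mul _ _
      _ = |x k + t * y k| := by rw [hs1, one_mul]
  have h2 : |x k + t * y k| ≤ ‖x + t • y‖ := by
    have h3 := (x + t • y).norm_coe_le_norm k
    simpa using h3
  nlinarith [h1, h2, hs, hk]

/-- Uniform bound away from the norm on a closed set where `|x|` is strictly below. -/
lemma maxAux {x : C(K, ℝ)} {b : ℝ} (hb : 0 < b) {C : Set K} (hC : IsClosed C)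
    (h : ∀ k ∈ C, |x k| < b) : ∃ η > 0, η ≤ b ∧ ∀ k ∈ C, |x k| ≤ b - η := by
  rcases C.eq_empty_or_nonempty with rfl | hne
  · exact ⟨b, hb, le_refl b, by simp⟩
  · obtain ⟨kc, hkc, hmax⟩ := hC.isCompact.exists_isMaxOn hne
      ((continuous_abs.comp x.continuous).continuousOn)
    refine ⟨b - |x kc|, by linarith [h kc hkc], by simpa using abs_nonneg (x kc), ?_⟩
    intro k hk
    have h4 : |x k| ≤ |x kc| := hmax hk
    linarith

/-- If `x·y < 0` everywhere on the norm-attaining set, then `L x y < 0`. -/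
lemma L_neg {x y : C(K, ℝ)} (hx : x ≠ 0)
    (h : ∀ k, |x k| = ‖x‖ → x k * y k < 0) : L x y < 0 := by
  have hx0 : (0 : ℝ) < ‖x‖ := norm_pos_iff.mpr hx
  haveI : Nonempty K := nonempty_of_ne_zero x hx
  set M : Set K := {k | |x k| = ‖x‖} with hM
  have hMclosed : IsClosed M :=
    isClosed_eq (continuous_abs.comp x.continuous) continuous_const
  obtain ⟨k₁, hk₁⟩ := exists_max x
  have hMne : M.Nonempty := ⟨k₁, hk₁⟩
  obtain ⟨kM, hkM, hmax⟩ := hMclosed.isCompact.exists_isMaxOn hMne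
    ((x.continuous.mul y.continuous).continuousOn)
  set δ : ℝ := -(x kM * y kM) / 2 with hδdef
  have hδ : 0 < δ := by
    have h5 := h kM hkM
    simp only [hδdef]; linarith
  have hMV : ∀ k ∈ M, x k * y k < -δ := by
    intro k hk
    have h6 : x k * y k ≤ x kM * y kM := hmax hk
    have h7 := h kM hkM
    simp only [hδdef]
    linarith
  set V : Set K := {k | x k * y k < -δ} with hV
  have hVopen : IsOpen V := isOpen_lt (x.continuous.mul y.continuous) continuous_const
  have hCsub : ∀ k ∈ Vᶜ, |x k| < ‖x‖ := by
    intro k hk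
    rcases lt_or_eq_of_le (abs_apply_le x k) with hlt | heq
    · exact hlt
    · exact absurd (hMV k heq) hk
  obtain ⟨η, hη, hηb, hηbd⟩ := maxAux hx0 hVopen.isClosed_compl hCsub
  set t : ℝ := min (η / (2 * (‖y‖ + 1))) (δ / (‖y‖ ^ 2 + 1)) with htdef
  have hy1 : (0 : ℝ) < ‖y‖ + 1 := by positivity
  have ht : 0 < t := by
    apply lt_min <;> positivity
  have ht1 : t * ‖y‖ ≤ η / 2 := by
    have h1 : t ≤ η / (2 * (‖y‖ + 1)) := min_le_left _ _
    have h2 : t * ‖y‖ ≤ η / (2 * (‖y‖ + 1)) * ‖y‖ :=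
      mul_le_mul_of_nonneg_right h1 (norm_nonneg y)
    have h3 : η / (2 * (‖y‖ + 1)) * ‖y‖ ≤ η / 2 := by
      rw [div_mul_eq_mul_div, div_le_div_iff₀ (by positivity) (by norm_num)]
      nlinarith [norm_nonneg y, hη]
    linarith
  have ht2 : t * ‖y‖ ^ 2 ≤ δ := by
    have h1 : t ≤ δ / (‖y‖ ^ 2 + 1) := min_le_right _ _
    have h2 : t * ‖y‖ ^ 2 ≤ δ / (‖y‖ ^ 2 + 1) * ‖y‖ ^ 2 :=
      mul_le_mul_of_nonneg_right h1 (by positivity)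
    have h3 : δ / (‖y‖ ^ 2 + 1) * ‖y‖ ^ 2 ≤ δ := by
      rw [div_mul_eq_mul_div, div_le_iff₀ (by positivity)]
      nlinarith [sq_nonneg ‖y‖, hδ]
    linarith
  set c : ℝ := max (‖x‖ - η / 2) (Real.sqrt (‖x‖ ^ 2 - t * δ)) with hcdef
  have hc0 : 0 ≤ c := le_trans (by linarith) (le_max_left _ _)
  have hclt : c < ‖x‖ := by
    apply max_lt (by linarith)
    rw [Real.sqrt_lt' hx0]
    nlinarith [ht, hδ]
  have hbound : ∀ k, |x k + t * y k| ≤ c := by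
    intro k
    by_cases hk : k ∈ V
    · refine le_trans ?_ (le_max_right _ _)
      rw [← Real.sqrt_sq_eq_abs]
      apply Real.sqrt_le_sqrt
      have habs : |x k| ≤ ‖x‖ := abs_apply_le x k
      have hyk : |y k| ≤ ‖y‖ := abs_apply_le y k
      have hxy : x k * y k < -δ := hk
      have hxk2 : x k ^ 2 ≤ ‖x‖ ^ 2 := by
        nlinarith [abs_nonneg (x k), neg_abs_le (x k), le_abs_self (x k)]
      have hyk2 : y k ^ 2 ≤ ‖y‖ ^ 2 := by
        nlinarith [abs_nonneg (y k), neg_abs_le (y k), le_abs_self (y k)]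
      nlinarith [ht, hδ, ht2, mul_pos ht hδ, sq_nonneg (y k), mul_le_mul_of_nonneg_left hyk2 (mul_pos ht ht).le]
    · refine le_trans ?_ (le_max_left _ _)
      have h1 : |x k| ≤ ‖x‖ - η := hηbd k hk
      have h2 : |t * y k| ≤ t * ‖y‖ := by
        rw [abs_mul, abs_of_pos ht]
        exact mul_le_mul_of_nonneg_left (abs_apply_le y k) ht.le
      calc |x k + t * y k| ≤ |x k| + |t * y k| := abs_add_le _ _
        _ ≤ ‖x‖ - η + t * ‖y‖ := add_le_add h1 h2
        _ ≤ ‖x‖ - η / 2 := by linarith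
  have hnorm : ‖x + t • y‖ ≤ c := by
    refine (ContinuousMap.norm_le _ hc0).mpr fun k => ?_
    simpa using hbound k
  calc L x y ≤ (‖x + t • y‖ - ‖x‖) / t := L_le x y ht
    _ < 0 := div_neg_of_neg_of_pos (by linarith) ht

/-- If `x·y` never vanishes on the norm-attaining set, then `ρ'₊(x,y) ≠ 0`. -/
lemma rhoPlus_ne_zero {x y : C(K, ℝ)} (hx : x ≠ 0)
    (h : ∀ k, |x k| = ‖x‖ → x k * y k ≠ 0) : rhoPlus x y ≠ 0 := by
  have hx0 : (0 : ℝ) < ‖x‖ := norm_pos_iff.mpr hx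
  rw [rhoPlus_eq]
  by_cases hpos : ∃ k, |x k| = ‖x‖ ∧ 0 < x k * y k
  · obtain ⟨k, hk, hky⟩ := hpos
    have hxk : x k ≠ 0 := by
      intro h0; rw [h0] at hky; simp at hky
    have hxkabs : (0 : ℝ) < |x k| := abs_pos.mpr hxk
    set s : ℝ := |x k| / x k with hsdef
    have hs : s * x k = |x k| := div_mul_cancel₀ _ hxk
    have hs1 : |s| = 1 := by
      rw [hsdef, abs_div, abs_abs, div_self (abs_ne_zero.mpr hxk)]
    have hsy : 0 < s * y k := by
      have e : s * y k = |x k| * (x k * y k) / (x k * x k) := by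
        field_simp [hsdef]
        rw [mul_right_comm, hs, mul_comm]
      rw [e]
      exact div_pos (mul_pos hxkabs hky) (mul_self_pos.mpr hxk)
    have hL : 0 < L x y := lt_of_lt_of_le hsy (L_ge_of_sign hs hs1 hk)
    exact (mul_pos hx0 hL).ne'
  · push_neg at hpos
    have hneg : ∀ k, |x k| = ‖x‖ → x k * y k < 0 := fun k hk =>
      lt_of_le_of_ne (hpos k hk) (h k hk)
    exact (mul_neg_of_pos_of_neg hx0 (L_neg hx hneg)).ne

/-- A function peaking exactly at `k₀` is `ρ₊`-orthogonal to any function vanishing at `k₀`. -/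
lemma rhoPlus_peak_eq_zero {g y : C(K, ℝ)} {k₀ : K} (hg1 : ‖g‖ = 1) (hgk : g k₀ = 1)
    (hlt : ∀ k, k ≠ k₀ → |g k| < 1) (hy0 : y k₀ = 0) : rhoPlus g y = 0 := by
  rw [rhoPlus_eq, hg1, one_mul]
  have hlow : (0 : ℝ) ≤ L g y := by
    have h1 : (1 : ℝ) * g k₀ = |g k₀| := by rw [hgk]; norm_num
    have h3 : |g k₀| = ‖g‖ := by rw [hgk, hg1]; norm_num
    have h4 := L_ge_of_sign (y := y) h1 abs_one h3
    rwa [one_mul, hy0] at h4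
  have hupp : ∀ ε : ℝ, 0 < ε → L g y ≤ 0 + ε := by
    intro ε hε
    set U : Set K := {k | |y k| < ε} with hU
    have hUopen : IsOpen U := isOpen_lt (continuous_abs.comp y.continuous) continuous_const
    have hcc : ∀ k ∈ Uᶜ, |g k| < 1 := by
      intro k hk
      refine hlt k fun hkk => hk ?_
      show |y k| < ε
      rw [hkk, hy0]
      simpa using hε
    obtain ⟨η, hη, hηb, hηbd⟩ := maxAux one_pos hUopen.isClosed_compl hcc
    set t : ℝ := η / (‖y‖ + 1) with htdef
    have ht : 0 < t := by positivity
    have htf : t * ‖y‖ ≤ η := by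
      rw [htdef, div_mul_eq_mul_div, div_le_iff₀ (by positivity)]
      nlinarith [norm_nonneg y, hη]
    have hb : ∀ k, |g k + t * y k| ≤ 1 + t * ε := by
      intro k
      by_cases hk : k ∈ U
      · have h1 : |g k| ≤ 1 := hg1 ▸ abs_apply_le g k
        have h2 : |t * y k| ≤ t * ε := by
          rw [abs_mul, abs_of_pos ht]
          exact mul_le_mul_of_nonneg_left (le_of_lt hk) ht.le
        calc |g k + t * y k| ≤ |g k| + |t * y k| := abs_add_le _ _
          _ ≤ 1 + t * ε := add_le_add h1 h2
      · have h1 : |g k| ≤ 1 - η := hηbd k hk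
        have h2 : |t * y k| ≤ t * ‖y‖ := by
          rw [abs_mul, abs_of_pos ht]
          exact mul_le_mul_of_nonneg_left (abs_apply_le y k) ht.le
        have h3 : (0 : ℝ) ≤ t * ε := by positivity
        calc |g k + t * y k| ≤ |g k| + |t * y k| := abs_add_le _ _
          _ ≤ 1 - η + t * ‖y‖ := add_le_add h1 h2
          _ ≤ 1 + t * ε := by linarith
    have hnorm : ‖g + t • y‖ ≤ 1 + t * ε := by
      refine (ContinuousMap.norm_le _ (by positivity)).mpr fun k => ?_
      simpa using hb k
    have := L_le g y ht
    rw [hg1] at this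
    calc L g y ≤ (‖g + t • y‖ - 1) / t := this
      _ ≤ ε := by rw [div_le_iff₀ ht]; linarith
      _ = 0 + ε := by ring
  have hupp' : L g y ≤ 0 := le_of_forall_pos_le_add fun ε hε => hupp ε hε
  linarith

end Stmt14Aux

open Stmt14Aux in
theorem stmt14 {K : Type*} [TopologicalSpace K] [CompactSpace K] [T2Space K]
    [PerfectlyNormalSpace K]
    (f : C(K, ℝ)) (hf : ‖f‖ = 1) :
    (∀ g : C(K, ℝ), rhoPlus g f = 0 → rhoPlus f g = 0) ↔ (∀ k : K, f k ≠ 0) := by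
  have hfne : f ≠ 0 := by
    intro h0
    rw [h0] at hf
    simp at hf
  constructor
  · intro h k₀ hf0
    obtain ⟨g₀, hg₀pre, -, -, hg₀range⟩ :=
      exists_continuous_one_zero_of_isCompact_of_isGδ (isCompact_singleton (x := k₀))
        (PerfectlyNormalSpace.closed_gdelta isClosed_singleton) isClosed_empty
        (Set.disjoint_empty _)
    set g : C(K, ℝ) := (2⁻¹ : ℝ) • (g₀ + 1) with hgdef
    have hg₀k : g₀ k₀ = 1 := by
      have h1 : k₀ ∈ g₀ ⁻¹' {1} := hg₀pre ▸ Set.mem_singleton k₀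
      simpa using h1
    have hgapp : ∀ k, g k = (g₀ k + 1) / 2 := by
      intro k
      simp [hgdef]
      ring
    have hgk : g k₀ = 1 := by rw [hgapp, hg₀k]; norm_num
    have hrange : ∀ k, 1 / 2 ≤ g k ∧ g k ≤ 1 := by
      intro k
      obtain ⟨h1, h2⟩ := hg₀range k
      rw [hgapp]
      constructor <;> linarith
    have hlt : ∀ k, k ≠ k₀ → |g k| < 1 := by
      intro k hk
      have h1 : g₀ k ≠ 1 := by
        intro h1
        apply hk
        have h2 : k ∈ g₀ ⁻¹' {1} := by simpa using h1
        rw [← hg₀pre] at h2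
        simpa using h2
      have h2 : g₀ k < 1 := lt_of_le_of_ne (hg₀range k).2 h1
      rw [abs_of_nonneg (by linarith [(hrange k).1]), hgapp]
      linarith
    have hgnorm : ‖g‖ = 1 := by
      refine le_antisymm ?_ ?_
      · refine (ContinuousMap.norm_le _ zero_le_one).mpr fun k => ?_
        obtain ⟨h1, h2⟩ := hrange k
        simp only [Real.norm_eq_abs]
        rw [abs_of_nonneg (by linarith)]
        exact h2
      · calc (1 : ℝ) = |g k₀| := by rw [hgk]; norm_num
          _ ≤ ‖g‖ := abs_apply_le g k₀
    have hzero : rhoPlus g f = 0 := rhoPlus_peak_eq_zero hgnorm hgk hlt hf0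
    refine rhoPlus_ne_zero hfne (fun k hk => ?_) (h g hzero)
    refine mul_ne_zero (fun h0 => ?_) (fun h0 => ?_)
    · rw [h0] at hk
      rw [hf] at hk
      simp at hk
    · linarith [(hrange k).1, h0.symm.le]
  · intro hnz g hg
    by_cases hg0 : g = 0
    · rw [hg0]
      exact rhoPlus_zero_right f
    · exact absurd hg (rhoPlus_ne_zero hg0 fun k hk =>
        mul_ne_zero (fun h0 => hg0 (by
          have : ‖g‖ = 0 := by rw [← hk, h0]; simp
          exact norm_eq_zero.mp this)) (hnz k))
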